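/- Assume additionally R > 8. Then for every integer k ≥ 2, |C_k| ≥ R_k^{n_{k−1}}/2^k ≥ 8·R_k; and for k = 1, |C₁| = R₁^{n₁}/2 ≥ 8·R₁. -/

import Mathlib

open Complex

noncomputable section

/-- `f₀(z) = z² + c` iterated `N` times. -/
def f0iter (c : ℂ) (N : ℕ) (z : ℂ) : ℂ := (fun w => w ^ 2 + c)^[N] z

/-- `n_k = 2^(N + k - 1)`. -/
def nseq (N k : ℕ) : ℕ := 2 ^ (N + k - 1)

/-- The radii `R_k`: `R₁ = 2R`, `R_{k+1} = max {|f_k(z)| : |z| = 2 R_k}` where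
`f_k(z) = f₀^N(z) · ∏_{j=1}^k (1 - (1/2)(z/R_j)^{n_j})`. -/
def Rseq (c : ℂ) (N : ℕ) (R : ℝ) : ℕ → ℝ
  | 0 => R
  | 1 => 2 * R
  | k + 2 =>
      sSup ((fun z => ‖f0iter c N z *
        ∏ j ∈ (Finset.Icc 1 (k + 1)).attach,
          (1 - (1 / 2) * (z / ((Rseq c N R j.1 : ℝ) : ℂ)) ^ nseq N j.1)‖) ''
        Metric.sphere (0 : ℂ) (2 * Rseq c N R (k + 1)))
  decreasing_by
  · have := j.2; simp only [Finset.mem_Icc] at this; omega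
  · omega

/-- `F_k(z) = 1 - (1/2)(z/R_k)^{n_k}`. -/
def Fseq (c : ℂ) (N : ℕ) (R : ℝ) (k : ℕ) (z : ℂ) : ℂ :=
  1 - (1 / 2) * (z / ((Rseq c N R k : ℝ) : ℂ)) ^ nseq N k

/-- The partial product `f_k(z) = f₀^N(z) · ∏_{j=1}^k F_j(z)`. -/
def fseq (c : ℂ) (N : ℕ) (R : ℝ) (k : ℕ) (z : ℂ) : ℂ :=
  f0iter c N z * ∏ j ∈ Finset.Icc 1 k, Fseq c N R j z

/-- The infinite product `f(z) = f₀^N(z) · ∏_{k=1}^∞ F_k(z)`. -/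
def flim (c : ℂ) (N : ℕ) (R : ℝ) (z : ℂ) : ℂ :=
  f0iter c N z * ∏' k : ℕ, Fseq c N R (k + 1) z

/-- The standing assumption `1/2 ≤ |f₀^N(z)|/|z|^{2^N} ≤ 2` for `|z| ≥ R`. -/
def OneBound (c : ℂ) (N : ℕ) (R : ℝ) : Prop :=
  ∀ z : ℂ, R ≤ ‖z‖ →
    1 / 2 ≤ ‖f0iter c N z‖ / ‖z‖ ^ 2 ^ N ∧
    ‖f0iter c N z‖ / ‖z‖ ^ 2 ^ N ≤ 2

/-- `C₁ = R₁^{n₁}/2`, and for `k ≥ 2`,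
`C_k = (-1)^{k-1} 2^{-k} R_k^{n_k} ∏_{j=1}^{k-1} R_j^{-n_j}`. -/
def Cseq (c : ℂ) (N : ℕ) (R : ℝ) (k : ℕ) : ℝ :=
  (-1) ^ (k - 1) * Rseq c N R k ^ nseq N k /
    (2 ^ k * ∏ j ∈ Finset.Icc 1 (k - 1), Rseq c N R j ^ nseq N j)

lemma Rseq_succ_succ (c : ℂ) (N : ℕ) (R : ℝ) (k : ℕ) :
    Rseq c N R (k + 2) =
      sSup ((fun z => ‖fseq c N R (k + 1) z‖) ''
        Metric.sphere (0 : ℂ) (2 * Rseq c N R (k + 1))) := by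
  rw [Rseq]
  congr 1
  apply congrArg (· '' _)
  funext z
  simp only [fseq, Fseq]
  congr 2
  exact Finset.prod_attach (Finset.Icc 1 (k+1)) (fun j => (1 - (1 / 2) * (z / ((Rseq c N R j : ℝ) : ℂ)) ^ nseq N j))

lemma continuous_fseq (c : ℂ) (N : ℕ) (R : ℝ) (k : ℕ) :
    Continuous (fseq c N R k) := by
  unfold fseq Fseq f0iter
  apply Continuous.mul
  · exact (Continuous.iterate (by continuity) N)
  · exact continuous_finset_prod _ (fun j _ => by continuity)

lemma sum_nseq (N : ℕ) (hN : 1 ≤ N) (K : ℕ) :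
    2 ^ N + ∑ j ∈ Finset.Icc 1 K, nseq N j = 2 ^ (N + K) := by
  induction K with
  | zero => simp
  | succ K ih =>
    have h1 : nseq N (K + 1) = 2 ^ (N + K) := rfl
    rw [Finset.sum_Icc_succ_top (by omega : 1 ≤ K + 1), h1, ← add_assoc, ih,
      show N + (K + 1) = (N + K) + 1 from rfl, pow_succ]
    ring

lemma Rseq_lb (c : ℂ) (N : ℕ) (hN : 10 ≤ N) (R : ℝ) (hR : 0 < R)
    (hone : OneBound c N R) (m : ℕ)
    (hpos : ∀ j, 1 ≤ j → j ≤ m + 1 → 0 < Rseq c N R j)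
    (hmono : ∀ j, 1 ≤ j → j ≤ m + 1 → Rseq c N R j ≤ Rseq c N R (m + 1))
    (hRk : R ≤ Rseq c N R (m + 1)) :
    Rseq c N R (m + 1) ^ nseq N (m + 2) /
      ∏ j ∈ Finset.Icc 1 (m + 1), Rseq c N R j ^ nseq N j ≤ Rseq c N R (m + 2) := by
  set r := Rseq c N R (m + 1) with hrdef
  have hr : 0 < r := hpos (m + 1) (by omega) le_rfl
  set z0 : ℂ := ((2 * r : ℝ) : ℂ) with hz0def
  have habs : ‖z0‖ = 2 * r := by
    rw [hz0def, Complex.norm_real, Real.norm_eq_abs, abs_of_pos (by linarith)]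
  have hz0 : z0 ∈ Metric.sphere (0 : ℂ) (2 * r) := by
    simp only [Metric.mem_sphere, dist_zero_right]
    rw [habs]
  have hb : BddAbove ((fun z => ‖fseq c N R (m + 1) z‖) ''
      Metric.sphere (0 : ℂ) (2 * r)) :=
    ((isCompact_sphere _ _).image
      (continuous_norm.comp (continuous_fseq c N R (m + 1)))).bddAbove
  have hle : ‖fseq c N R (m + 1) z0‖ ≤ Rseq c N R (m + 2) := by
    rw [Rseq_succ_succ]
    exact le_csSup hb ⟨z0, hz0, rfl⟩
  refine le_trans ?_ hle
  rw [fseq, norm_mul, norm_prod]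
  -- bound on |f0iter z0|
  have h0 : r ^ 2 ^ N ≤ ‖f0iter c N z0‖ := by
    have h1 := (hone z0 (by rw [habs]; linarith)).1
    rw [habs] at h1
    have hp : (0:ℝ) < (2 * r) ^ 2 ^ N := by positivity
    rw [le_div_iff₀ hp] at h1
    have h2 : (2 * r) ^ 2 ^ N = 2 ^ 2 ^ N * r ^ 2 ^ N := mul_pow 2 r _
    have h3 : (2:ℝ) ≤ 2 ^ 2 ^ N := by
      calc (2:ℝ) = 2 ^ 1 := (pow_one 2).symm
      _ ≤ 2 ^ 2 ^ N := by
        apply pow_le_pow_right₀ one_le_two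
        exact Nat.one_le_two_pow
    nlinarith [pow_pos hr (2 ^ N)]
  -- bound on each factor
  have hfac : ∀ j ∈ Finset.Icc 1 (m + 1),
      r ^ nseq N j / Rseq c N R j ^ nseq N j ≤ ‖Fseq c N R j z0‖ := by
    intro j hj
    rw [Finset.mem_Icc] at hj
    set s := Rseq c N R j with hsdef
    have hs : 0 < s := hpos j hj.1 hj.2
    have hsr : s ≤ r := hmono j hj.1 hj.2
    set n := nseq N j with hndef
    have hn2 : 2 ≤ n := by
      rw [hndef]; unfold nseq
      calc 2 = 2 ^ 1 := rfl
      _ ≤ 2 ^ (N + j - 1) := Nat.pow_le_pow_right (by omega) (by omega)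
    have hx : (2:ℝ) ≤ 2 * r / s := by
      rw [le_div_iff₀ hs]; linarith
    have hval : Fseq c N R j z0 = ((1 - (1/2) * (2 * r / s) ^ n : ℝ) : ℂ) := by
      rw [Fseq, hz0def, ← hsdef, ← hndef]
      push_cast
      ring
    rw [hval, Complex.norm_real, Real.norm_eq_abs]
    have hxn : (2:ℝ) ^ n ≤ (2 * r / s) ^ n := pow_le_pow_left₀ (by norm_num) hx n
    have h4 : (4:ℝ) ≤ 2 ^ n := by
      calc (4:ℝ) = 2 ^ 2 := by norm_num
      _ ≤ 2 ^ n := pow_le_pow_right₀ one_le_two hn2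
    have hrs : r ^ n / s ^ n = (r / s) ^ n := (div_pow r s n).symm
    rw [hrs]
    have hsplit : (2 * r / s) ^ n = 2 ^ n * (r / s) ^ n := by
      rw [← mul_pow]; congr 1; field_simp
    have h1rs : (1:ℝ) ≤ r / s := by rw [le_div_iff₀ hs]; linarith
    have hrsn : (1:ℝ) ≤ (r / s) ^ n := one_le_pow₀ h1rs
    rw [abs_of_nonpos (by nlinarith), neg_sub]
    nlinarith
  have hprod := Finset.prod_le_prod (s := Finset.Icc 1 (m + 1))
    (f := fun j => r ^ nseq N j / Rseq c N R j ^ nseq N j)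
    (g := fun j => ‖Fseq c N R j z0‖)
    (fun j hj => by
      have := hpos j (Finset.mem_Icc.mp hj).1 (Finset.mem_Icc.mp hj).2
      positivity) hfac
  have hprodeq : ∏ j ∈ Finset.Icc 1 (m + 1), (r ^ nseq N j / Rseq c N R j ^ nseq N j)
      = r ^ (∑ j ∈ Finset.Icc 1 (m + 1), nseq N j) /
        ∏ j ∈ Finset.Icc 1 (m + 1), Rseq c N R j ^ nseq N j := by
    rw [Finset.prod_div_distrib, Finset.prod_pow_eq_pow_sum]
  have hPpos : 0 < ∏ j ∈ Finset.Icc 1 (m + 1), Rseq c N R j ^ nseq N j := by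
    apply Finset.prod_pos
    intro j hj
    have := hpos j (Finset.mem_Icc.mp hj).1 (Finset.mem_Icc.mp hj).2
    positivity
  rw [hprodeq] at hprod
  have hexp : nseq N (m + 2) = 2 ^ N + ∑ j ∈ Finset.Icc 1 (m + 1), nseq N j := by
    rw [sum_nseq N (by omega)]
    unfold nseq
    congr 1 <;> omega
  rw [hexp, pow_add]
  rw [mul_div_assoc]
  refine mul_le_mul h0 hprod ?_ (norm_nonneg _)
  positivity

lemma nseq_double (N : ℕ) (hN : 1 ≤ N) (k : ℕ) (hk : 1 ≤ k) :
    nseq N k = nseq N (k - 1) + nseq N (k - 1) := by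
  unfold nseq
  have h1 : N + k - 1 = (N + (k - 1) - 1) + 1 := by omega
  rw [h1, pow_succ]
  ring

lemma nseq_ge_two (N : ℕ) (hN : 2 ≤ N) (k : ℕ) : 2 ≤ nseq N k := by
  unfold nseq
  have h1 : 1 ≤ N + k - 1 := by omega
  calc 2 = 2 ^ 1 := rfl
  _ ≤ 2 ^ (N + k - 1) := Nat.pow_le_pow_right (by norm_num) h1

lemma key (c : ℂ) (N : ℕ) (hN : 10 ≤ N) (R : ℝ) (hR : 0 < R)
    (hone : OneBound c N R) (hR8 : 8 < R) :
    ∀ k, 1 ≤ k →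
      (∀ j, 1 ≤ j → j ≤ k → 2 * R ≤ Rseq c N R j) ∧
      (∀ j, 1 ≤ j → j ≤ k → Rseq c N R j ≤ Rseq c N R k) ∧
      ∏ j ∈ Finset.Icc 1 (k - 1), Rseq c N R j ^ nseq N j ≤
        Rseq c N R k ^ nseq N (k - 1) := by
  intro k hk
  induction k, hk using Nat.le_induction with
  | base =>
    refine ⟨?_, ?_, ?_⟩
    · intro j h1 h2
      have : j = 1 := by omega
      subst this
      rw [Rseq]
    · intro j h1 h2
      have : j = 1 := by omega
      subst this
      exact le_rfl
    · rw [Nat.sub_self, Finset.Icc_eq_empty (by omega), Finset.prod_empty]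
      exact one_le_pow₀ (by rw [Rseq]; linarith)
  | succ m hm ih =>
    obtain ⟨hlow, hmono, hP⟩ := ih
    obtain ⟨m, rfl⟩ : ∃ m', m = m' + 1 := ⟨m - 1, by omega⟩
    have e : m + 1 + 1 = m + 2 := rfl
    rw [e]
    set r := Rseq c N R (m + 1) with hrdef
    have hr2R : 2 * R ≤ r := hlow (m + 1) (by omega) le_rfl
    have hr16 : (16:ℝ) ≤ r := by linarith
    have hr : 0 < r := by linarith
    have hpos : ∀ j, 1 ≤ j → j ≤ m + 1 → 0 < Rseq c N R j := fun j h1 h2 =>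
      lt_of_lt_of_le (by linarith) (hlow j h1 h2)
    have hPpos : 0 < ∏ j ∈ Finset.Icc 1 (m + 1), Rseq c N R j ^ nseq N j := by
      apply Finset.prod_pos
      intro j hj
      have := hpos j (Finset.mem_Icc.mp hj).1 (Finset.mem_Icc.mp hj).2
      positivity
    have hlb := Rseq_lb c N hN R hR hone m hpos hmono (by linarith)
    have hPm : ∏ j ∈ Finset.Icc 1 (m + 1), Rseq c N R j ^ nseq N j
        = (∏ j ∈ Finset.Icc 1 m, Rseq c N R j ^ nseq N j) * r ^ nseq N (m + 1) :=
      Finset.prod_Icc_succ_top (by omega) _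
    have hPsimp : ∏ j ∈ Finset.Icc 1 m, Rseq c N R j ^ nseq N j ≤ r ^ nseq N m := by
      have := hP
      simpa using this
    -- key step : r ^ nseq N m ≤ Rseq (m+2)
    have hd1 : nseq N (m + 1) = nseq N m + nseq N m := by
      have := nseq_double N (by omega) (m + 1) (by omega)
      simpa using this
    have hd2 : nseq N (m + 2) = nseq N (m + 1) + nseq N (m + 1) := by
      have := nseq_double N (by omega) (m + 2) (by omega)
      simpa using this
    have hstep : r ^ nseq N m ≤ Rseq c N R (m + 2) := by
      refine le_trans ?_ hlb
      rw [le_div_iff₀ hPpos, hPm]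
      have h1 : r ^ nseq N m * ((∏ j ∈ Finset.Icc 1 m, Rseq c N R j ^ nseq N j)
          * r ^ nseq N (m + 1)) ≤ r ^ nseq N m * (r ^ nseq N m * r ^ nseq N (m + 1)) := by
        apply mul_le_mul_of_nonneg_left _ (by positivity)
        exact mul_le_mul_of_nonneg_right hPsimp (by positivity)
      refine le_trans h1 (le_of_eq ?_)
      rw [← pow_add, ← pow_add]
      congr 1
      omega
    have hge1 : (1:ℝ) ≤ r := by linarith
    have hrle : r ≤ Rseq c N R (m + 2) :=
      le_trans (le_self_pow₀ hge1 (by have := nseq_ge_two N (by omega) m; omega)) hstep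
    refine ⟨?_, ?_, ?_⟩
    · intro j h1 h2
      rcases Nat.lt_or_ge j (m + 2) with h | h
      · exact hlow j h1 (by omega)
      · have : j = m + 2 := by omega
        subst this
        linarith
    · intro j h1 h2
      rcases Nat.lt_or_ge j (m + 2) with h | h
      · exact le_trans (hmono j h1 (by omega)) hrle
      · have : j = m + 2 := by omega
        subst this
        exact le_rfl
    · have hs1 : (m + 2 : ℕ) - 1 = m + 1 := by omega
      rw [hs1, hPm]
      have h1 : (∏ j ∈ Finset.Icc 1 m, Rseq c N R j ^ nseq N j) * r ^ nseq N (m + 1)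
          ≤ r ^ nseq N m * r ^ nseq N (m + 1) :=
        mul_le_mul_of_nonneg_right hPsimp (by positivity)
      refine le_trans h1 ?_
      rw [← pow_add]
      have h2 : nseq N m + nseq N (m + 1) ≤ nseq N m * nseq N (m + 1) :=
        Nat.add_le_mul (nseq_ge_two N (by omega) m) (nseq_ge_two N (by omega) (m + 1))
      calc r ^ (nseq N m + nseq N (m + 1)) ≤ r ^ (nseq N m * nseq N (m + 1)) :=
            pow_le_pow_right₀ hge1 h2
      _ = (r ^ nseq N m) ^ nseq N (m + 1) := pow_mul r _ _
      _ ≤ Rseq c N R (m + 2) ^ nseq N (m + 1) := pow_le_pow_left₀ (by positivity) hstep _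

/-- If additionally `R > 8`, then for `k ≥ 2`, `|C_k| ≥ R_k^{n_{k-1}}/2^k ≥ 8 R_k`,
and `|C₁| = R₁^{n₁}/2 ≥ 8 R₁`. -/
theorem stmt7 (c : ℂ) (N : ℕ) (hN : 10 ≤ N) (R : ℝ) (hR : 0 < R)
    (hone : OneBound c N R) (hR8 : 8 < R) :
    (∀ k : ℕ, 2 ≤ k →
      Rseq c N R k ^ nseq N (k - 1) / 2 ^ k ≤ |Cseq c N R k| ∧
      8 * Rseq c N R k ≤ Rseq c N R k ^ nseq N (k - 1) / 2 ^ k) ∧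
    (|Cseq c N R 1| = Rseq c N R 1 ^ nseq N 1 / 2 ∧
      8 * Rseq c N R 1 ≤ Rseq c N R 1 ^ nseq N 1 / 2) := by
  constructor
  · intro k hk
    obtain ⟨hlow, hmono, hP⟩ := key c N hN R hR hone hR8 k (by omega)
    have hr2R : 2 * R ≤ Rseq c N R k := hlow k (by omega) le_rfl
    have hr16 : (16:ℝ) ≤ Rseq c N R k := by linarith
    have hr : 0 < Rseq c N R k := by linarith
    have hPpos : 0 < ∏ j ∈ Finset.Icc 1 (k - 1), Rseq c N R j ^ nseq N j := by
      apply Finset.prod_pos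
      intro j hj
      have h := Finset.mem_Icc.mp hj
      have h2 := hlow j h.1 (by omega)
      have h3 : 0 < Rseq c N R j := by linarith
      positivity
    have hnk : nseq N k = nseq N (k - 1) + nseq N (k - 1) :=
      nseq_double N (by omega) k (by omega)
    have habsC : |Cseq c N R k| = Rseq c N R k ^ nseq N k /
        (2 ^ k * ∏ j ∈ Finset.Icc 1 (k - 1), Rseq c N R j ^ nseq N j) := by
      rw [Cseq, abs_div, abs_mul, _root_.abs_pow, abs_neg, abs_one, one_pow, one_mul,
        abs_of_pos (pow_pos hr _), abs_of_pos (by positivity :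
          (0:ℝ) < 2 ^ k * ∏ j ∈ Finset.Icc 1 (k - 1), Rseq c N R j ^ nseq N j)]
    have hk8 : k + 4 ≤ nseq N (k - 1) := by
      have h1 : k + 8 < 2 ^ (k + 8) := Nat.lt_two_pow_self
      have h2 : 2 ^ (k + 8) ≤ 2 ^ (N + (k - 1) - 1) :=
        Nat.pow_le_pow_right (by norm_num) (by omega)
      have h3 : nseq N (k - 1) = 2 ^ (N + (k - 1) - 1) := rfl
      omega
    constructor
    · rw [habsC, div_le_div_iff₀ (by positivity) (by positivity)]
      rw [hnk, pow_add]
      calc Rseq c N R k ^ nseq N (k-1) *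
            (2 ^ k * ∏ j ∈ Finset.Icc 1 (k - 1), Rseq c N R j ^ nseq N j)
          = (Rseq c N R k ^ nseq N (k-1) *
              ∏ j ∈ Finset.Icc 1 (k - 1), Rseq c N R j ^ nseq N j) * 2 ^ k := by ring
        _ ≤ (Rseq c N R k ^ nseq N (k-1) * Rseq c N R k ^ nseq N (k-1)) * 2 ^ k := by
            apply mul_le_mul_of_nonneg_right _ (by positivity)
            exact mul_le_mul_of_nonneg_left hP (by positivity)
        _ = Rseq c N R k ^ nseq N (k-1) * Rseq c N R k ^ nseq N (k-1) * 2 ^ k := rfl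
    · rw [le_div_iff₀ (by positivity : (0:ℝ) < 2 ^ k)]
      have h8 : 8 * (2:ℝ) ^ k ≤ 16 ^ (nseq N (k - 1) - 1) := by
        rw [show (16:ℝ) = 2 ^ 4 by norm_num, ← pow_mul,
          show (8:ℝ) = 2 ^ 3 by norm_num, ← pow_add]
        exact pow_le_pow_right₀ one_le_two (by omega)
      calc 8 * Rseq c N R k * 2 ^ k = (8 * 2 ^ k) * Rseq c N R k := by ring
        _ ≤ 16 ^ (nseq N (k - 1) - 1) * Rseq c N R k :=
            mul_le_mul_of_nonneg_right h8 hr.le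
        _ ≤ Rseq c N R k ^ (nseq N (k - 1) - 1) * Rseq c N R k :=
            mul_le_mul_of_nonneg_right
              (pow_le_pow_left₀ (by norm_num) hr16 _) hr.le
        _ = Rseq c N R k ^ nseq N (k - 1) := by
            rw [← pow_succ]
            congr 1
            omega
  · have hr1 : Rseq c N R 1 = 2 * R := by rw [Rseq]
    have hC1 : Cseq c N R 1 = Rseq c N R 1 ^ nseq N 1 / 2 := by
      rw [Cseq, Nat.sub_self, Finset.Icc_eq_empty (by omega), Finset.prod_empty]
      norm_num
    have hn1 : 2 ≤ nseq N 1 := nseq_ge_two N (by omega) 1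
    constructor
    · rw [hC1, abs_of_pos]
      rw [hr1]
      positivity
    · rw [hr1, le_div_iff₀ (by norm_num : (0:ℝ) < 2)]
      have h16 : (16:ℝ) ≤ 16 ^ (nseq N 1 - 1) := by
        calc (16:ℝ) = 16 ^ 1 := (pow_one _).symm
          _ ≤ 16 ^ (nseq N 1 - 1) := pow_le_pow_right₀ (by norm_num) (by omega)
      calc 8 * (2 * R) * 2 = 16 * (2 * R) := by ring
        _ ≤ 16 ^ (nseq N 1 - 1) * (2 * R) :=
            mul_le_mul_of_nonneg_right h16 (by linarith)
        _ ≤ (2 * R) ^ (nseq N 1 - 1) * (2 * R) :=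
            mul_le_mul_of_nonneg_right
              (pow_le_pow_left₀ (by norm_num) (by linarith) _) (by linarith)
        _ = (2 * R) ^ nseq N 1 := by
            rw [← pow_succ]
            congr 1
            omega


end
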